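/- Let T be a monoidal (commutative) monad on Set, L a signature, V a type of variables, and t₁ = t₂ a one-drop equation of L-terms over V. If the equation t₁ = t₂ holds in the lifted L-structure on T PUnit (the lifting of the unique L-structure on the one-element set), i.e. t₁ and t₂ have equal realizations in T PUnit under every valuation V → T PUnit, then T is affine. -/

import Mathlib

open FirstOrder FirstOrder.Language

universe u v w

/-- canonical n-ary sequencing ψⁿ obtained from ψ -/
def seqFin {T : Type u → Type u} [Monad T] {A : Type u} :
    {n : ℕ} → (Fin n → T A) → T (Fin n → A)
  | 0, _ => pure (fun i => i.elim0)
  | _ + 1, xs => (fun a f => Fin.cons a f) <$> xs 0 <*> seqFin (fun i => xs i.succ)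

open Classical in
noncomputable def occCount {L : Language} {V : Type*} (v : V) : L.Term V → ℕ
  | .var w => if w = v then 1 else 0
  | .func _ ts => ∑ i, occCount v (ts i)

/-- the lifted structure on `T A` -/
def liftedStructure (T : Type u → Type u) [Monad T] {L : Language} {A : Type u}
    [L.Structure A] : L.Structure (T A) where
  funMap f xs := Structure.funMap f <$> seqFin xs
  RelMap _ _ := False

/-- T preserves the equation t₁ = t₂ -/
def Preserves (T : Type u → Type u) [Monad T] {L : Language} {V : Type*}
    (t₁ t₂ : L.Term V) : Prop :=
  ∀ (A : Type u) (_ : L.Structure A),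
    (∀ val : V → A, t₁.realize val = t₂.realize val) →
    ∀ val : V → T A,
      @Term.realize L (T A) (liftedStructure T) V val t₁ =
      @Term.realize L (T A) (liftedStructure T) V val t₂

/-- the unique (relation-free) structure on the one-element set -/
def punitStructure (L : Language) : L.Structure PUnit.{u+1} where
  funMap _ _ := PUnit.unit
  RelMap _ _ := False


section AffineAux
variable {T : Type u → Type u} [Monad T] [LawfulMonad T]

lemma map_unit_eq (f : PUnit.{u+1} → PUnit.{u+1}) (x : T PUnit.{u+1}) : f <$> x = x := by
  have : f = id := funext fun _ => rfl
  rw [this, id_map]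

lemma seqFin_pure : ∀ {n : ℕ} (xs : Fin n → T PUnit.{u+1}),
    (∀ i, xs i = pure PUnit.unit) → seqFin xs = pure (fun _ => PUnit.unit)
  | 0, xs, h => congrArg pure (Subsingleton.elim _ _)
  | n+1, xs, h => by
    rw [seqFin, h 0, seqFin_pure (fun i => xs i.succ) (fun i => h i.succ)]
    simp only [map_pure, seq_pure]

lemma map_seqFin_single : ∀ {n : ℕ} (xs : Fin n → T PUnit.{u+1}) (j : Fin n),
    (∀ i, i ≠ j → xs i = pure PUnit.unit) →
    (fun _ => PUnit.unit) <$> seqFin xs = xs j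
  | n+1, xs, j, h => by
    induction j using Fin.cases with
    | zero =>
      rw [seqFin, seqFin_pure (fun i => xs i.succ) (fun i => h i.succ (by simp [Fin.succ_ne_zero]))]
      simp only [seq_pure, Functor.map_map]
      exact map_unit_eq _ _
    | succ i =>
      rw [seqFin, h 0 (by simp [(Fin.succ_ne_zero i).symm]), map_pure, pure_seq]
      have := map_seqFin_single (fun k => xs k.succ) i
        (fun k hk => h k.succ (by simpa using hk))
      simpa [Functor.map_map] using this

lemma sum_eq_one_nat {n : ℕ} (f : Fin n → ℕ) (h : ∑ i, f i = 1) :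
    ∃ j, f j = 1 ∧ ∀ i, i ≠ j → f i = 0 := by
  obtain ⟨j, -, hj⟩ := Finset.exists_ne_zero_of_sum_ne_zero (by omega : ∑ i, f i ≠ 0)
  have hle : f j ≤ 1 := h ▸ Finset.single_le_sum (fun i _ => Nat.zero_le _) (Finset.mem_univ j)
  have hj1 : f j = 1 := by omega
  refine ⟨j, hj1, fun i hi => ?_⟩
  have := Finset.add_sum_erase Finset.univ f (Finset.mem_univ j)
  rw [h, hj1] at this
  have h0 : ∑ i ∈ Finset.univ.erase j, f i = 0 := by omega
  exact (Finset.sum_eq_zero_iff.mp h0) i (Finset.mem_erase.mpr ⟨hi, Finset.mem_univ i⟩)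

open Classical in
lemma realize_val (L : Language) (V : Type w) (v : V) (x : T PUnit.{u+1}) :
    ∀ t : L.Term V,
      (occCount v t = 0 →
        @Term.realize L (T PUnit.{u+1}) (@liftedStructure T _ L _ (punitStructure L)) V
          (fun w => if w = v then x else pure PUnit.unit) t = pure PUnit.unit) ∧
      (occCount v t = 1 →
        @Term.realize L (T PUnit.{u+1}) (@liftedStructure T _ L _ (punitStructure L)) V
          (fun w => if w = v then x else pure PUnit.unit) t = x)
  | .var w => by
    by_cases hw : w = v <;>
      constructor <;> intro h <;> simp [occCount, hw] at h ⊢ <;> simp [Term.realize, hw]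
  | .func f ts => by
    have ih := fun i => realize_val L V v x (ts i)
    have hreal : @Term.realize L (T PUnit.{u+1})
        (@liftedStructure T _ L _ (punitStructure L)) V
        (fun w => if w = v then x else pure PUnit.unit) (.func f ts) =
        (fun _ => PUnit.unit) <$> seqFin (fun i =>
          @Term.realize L (T PUnit.{u+1})
            (@liftedStructure T _ L _ (punitStructure L)) V
            (fun w => if w = v then x else pure PUnit.unit) (ts i)) := by
      simp [Term.realize, liftedStructure, punitStructure]
      rfl
    constructor <;> intro h
    · have hall : ∀ i, occCount v (ts i) = 0 := by
        simpa [occCount, Finset.sum_eq_zero_iff] using h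
      rw [hreal, seqFin_pure _ (fun i => (ih i).1 (hall i))]
      simp
    · obtain ⟨j, hj1, hj0⟩ := sum_eq_one_nat _ (by simpa [occCount] using h)
      rw [hreal, map_seqFin_single _ j (fun i hi => (ih i).1 (hj0 i hi))]
      exact (ih j).2 hj1
end AffineAux

/-- If a one-drop equation holds in the lifted structure on `T PUnit`,
then `T` is affine. -/
theorem one_drop_on_TPUnit_implies_affine
    (T : Type u → Type u) [Monad T] [LawfulMonad T] [CommApplicative T]
    (L : Language) [∀ n, IsEmpty (L.Relations n)] (V : Type w)
    (t₁ t₂ : L.Term V)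
    (hdrop : ∃ v : V, (occCount v t₁ = 1 ∧ occCount v t₂ = 0) ∨
                      (occCount v t₂ = 1 ∧ occCount v t₁ = 0))
    (hsat : ∀ val : V → T PUnit.{u+1},
      @Term.realize L (T PUnit.{u+1})
        (@liftedStructure T _ L PUnit.{u+1} (punitStructure L)) V val t₁ =
      @Term.realize L (T PUnit.{u+1})
        (@liftedStructure T _ L PUnit.{u+1} (punitStructure L)) V val t₂) :
    Subsingleton (T PUnit.{u+1}) := by
  constructor
  intro a b
  obtain ⟨v, hv⟩ := hdrop
  classical
  have key : ∀ (x : T PUnit.{u+1}), x = pure PUnit.unit := by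
    intro x
    have hs := hsat (fun w => if w = v then x else pure PUnit.unit)
    rcases hv with ⟨h1, h2⟩ | ⟨h1, h2⟩
    · rw [(realize_val L V v x t₁).2 h1, (realize_val L V v x t₂).1 h2] at hs
      exact hs
    · rw [(realize_val L V v x t₂).2 h1, (realize_val L V v x t₁).1 h2] at hs
      exact hs.symm
  rw [key a, key b]
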